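/- Let G be a Stopping Game with n nodes. Then there is a bijective numbering of the nodes of G by the integers 1, …, n which assigns the two terminal nodes the numbers n−1 and n, and such that every non-terminal node has at least one out-arc ending at a node with a strictly higher number. -/

import Mathlib

/-- The four kinds of nodes in a (simple stochastic) game graph. -/
inductive NodeLabel : Type
  | max
  | min
  | avg
  | term
  deriving DecidableEq

/-- `BadSubgraph label A S`: `S` is a *bad subgraph* of the directed graph with arc
relation `A` and node labeling `label`, i.e. `S` is nonempty, every max node in `S` has
an out-arc ending in `S`, every min node in `S` has an out-arc ending in `S`, every
average node in `S` has all of its out-arcs ending in `S`, `S` contains no terminal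
node, and `S` is strongly connected (via directed paths all of whose nodes lie in `S`). -/
def BadSubgraph {V : Type} (label : V → NodeLabel) (A : V → V → Prop) (S : Set V) : Prop :=
  S.Nonempty ∧
  (∀ v ∈ S, label v = NodeLabel.max → ∃ w ∈ S, A v w) ∧
  (∀ v ∈ S, label v = NodeLabel.min → ∃ w ∈ S, A v w) ∧
  (∀ v ∈ S, label v = NodeLabel.avg → ∀ w, A v w → w ∈ S) ∧
  (∀ v ∈ S, label v ≠ NodeLabel.term) ∧
  (∀ u ∈ S, ∀ v ∈ S, Relation.ReflTransGen (fun a b => a ∈ S ∧ b ∈ S ∧ A a b) u v)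

/-- A Simple Stochastic Game on the (finite) node type `V`: every node is labeled
max, min, average or terminal; there are exactly two terminal nodes `t0` (terminal-0)
and `t1` (terminal-1), which have no out-arcs; every non-terminal node `v` has exactly
two out-arcs, ending at `(G.succ v).1` and `(G.succ v).2` (parallel arcs and self-loops
are allowed: the two successors may coincide, and may equal `v`). -/
structure SSG (V : Type) where
  label : V → NodeLabel
  t0 : V
  t1 : V
  t0_ne_t1 : t0 ≠ t1
  term_iff : ∀ v, label v = NodeLabel.term ↔ v = t0 ∨ v = t1
  succ : V → V × V

/-- The arc relation of an SSG: there is an arc from `u` to `v` iff `u` is non-terminal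
and one of the two out-arcs of `u` ends at `v`. -/
def SSG.Arc {V : Type} (G : SSG V) (u v : V) : Prop :=
  G.label u ≠ NodeLabel.term ∧ ((G.succ u).1 = v ∨ (G.succ u).2 = v)

/-- A strategy pair, encoded as a choice function `c` that, at every max node and every
min node, selects one of the two out-arcs of that node. -/
def SSG.IsStrategyPair {V : Type} (G : SSG V) (c : V → V) : Prop :=
  ∀ v, (G.label v = NodeLabel.max ∨ G.label v = NodeLabel.min) →
    c v = (G.succ v).1 ∨ c v = (G.succ v).2

/-- The arc relation of the strategy subgraph `G_{σ,τ}` induced by the choice function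
`c`: max and min nodes keep only their selected out-arc, average nodes keep both
out-arcs, terminal nodes have no out-arcs. -/
def SSG.StratArc {V : Type} (G : SSG V) (c : V → V) (u v : V) : Prop :=
  (G.label u = NodeLabel.avg ∧ ((G.succ u).1 = v ∨ (G.succ u).2 = v)) ∨
  ((G.label u = NodeLabel.max ∨ G.label u = NodeLabel.min) ∧ c u = v)

/-- A Stopping Game: for every strategy pair and every node `u`, there is a directed
path from `u` to a terminal node in the strategy subgraph. -/
def SSG.Stopping {V : Type} (G : SSG V) : Prop :=
  ∀ c : V → V, G.IsStrategyPair c → ∀ u, ∃ t, G.label t = NodeLabel.term ∧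
    Relation.ReflTransGen (G.StratArc c) u t

/-- A stable assignment for an SSG: values lie in `[0,1]`, the terminals get values `0`
and `1`, and every max, min and average node is satisfied. -/
def SSG.Stable {V : Type} (G : SSG V) (v : V → ℝ) : Prop :=
  (∀ i, v i ∈ Set.Icc (0 : ℝ) 1) ∧ v G.t0 = 0 ∧ v G.t1 = 1 ∧
  (∀ i, G.label i = NodeLabel.max → v i = max (v (G.succ i).1) (v (G.succ i).2)) ∧
  (∀ i, G.label i = NodeLabel.min → v i = min (v (G.succ i).1) (v (G.succ i).2)) ∧
  (∀ i, G.label i = NodeLabel.avg → v i = (v (G.succ i).1 + v (G.succ i).2) / 2)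

lemma escape {V : Type} (G : SSG V) (hG : G.Stopping)
    (U : Set V) (hne : U.Nonempty) (hterm : ∀ v ∈ U, G.label v ≠ NodeLabel.term) :
    ∃ v ∈ U, ∃ w, G.Arc v w ∧ w ∉ U := by
  by_contra h
  push_neg at h
  obtain ⟨u, hu⟩ := hne
  obtain ⟨t, ht, hpath⟩ := hG (fun v => (G.succ v).1) (fun v _ => Or.inl rfl) u
  have key : ∀ x, Relation.ReflTransGen (G.StratArc (fun v => (G.succ v).1)) u x → x ∈ U := by
    intro x hx
    induction hx with
    | refl => exact hu
    | tail _ hstep ih =>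
      rename_i b x' _
      have hb : G.label b ≠ NodeLabel.term := hterm _ ih
      rcases hstep with ⟨_, hsucc⟩ | ⟨_, hc⟩
      · exact h _ ih _ ⟨hb, hsucc⟩
      · exact h _ ih _ ⟨hb, Or.inl hc⟩
  exact hterm t (key t hpath) ht

def Good {V : Type} (G : SSG V) (L : List V) : Prop :=
  ∀ i, (h : i < L.length) → G.label (L.get ⟨i, h⟩) ≠ NodeLabel.term →
    ∃ j, ∃ hj : j < L.length, j < i ∧ G.Arc (L.get ⟨i, h⟩) (L.get ⟨j, hj⟩)

lemma extend {V : Type} [Fintype V] (G : SSG V) (hG : G.Stopping) :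
    ∀ m (L : List V), L.Nodup → (∀ v, G.label v = NodeLabel.term → v ∈ L) →
      Good G L → L.length + m = Fintype.card V →
      ∃ L' : List V, L'.Nodup ∧ (∀ v, v ∈ L') ∧ Good G L' ∧ L <+: L' := by
  haveI := Classical.decEq V
  intro m
  induction m with
  | zero =>
    intro L hnd hterm hgood hlen
    refine ⟨L, hnd, ?_, hgood, List.prefix_refl L⟩
    intro v
    have h1 : L.toFinset.card = Fintype.card V := by
      rw [List.toFinset_card_of_nodup hnd]; omega
    have h2 : L.toFinset = Finset.univ := Finset.eq_univ_of_card _ h1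
    have : v ∈ L.toFinset := h2 ▸ Finset.mem_univ v
    exact List.mem_toFinset.mp this
  | succ m ih =>
    intro L hnd hterm hgood hlen
    have hUne : ({v | v ∉ L} : Set V).Nonempty := by
      by_contra hc
      push_neg at hc
      simp only [Set.not_nonempty_iff_eq_empty, Set.eq_empty_iff_forall_notMem,
        Set.mem_setOf_eq, not_not] at hc
      have : Finset.univ ⊆ L.toFinset := fun v _ => List.mem_toFinset.mpr (hc v)
      have := Finset.card_le_card this
      rw [List.toFinset_card_of_nodup hnd, Finset.card_univ] at this
      omega
    obtain ⟨v, hv, w, harc, hw⟩ := escape G hG _ hUne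
      (fun x hx => fun hxt => hx (hterm x hxt))
    simp only [Set.mem_setOf_eq] at hv hw
    push_neg at hw
    have hvt : G.label v ≠ NodeLabel.term := fun hvt => hv (hterm v hvt)
    have hnd2 : (L ++ [v]).Nodup := by simp [List.nodup_append, hnd, hv]; exact fun a ha h => hv (h ▸ ha)
    have hterm2 : ∀ x, G.label x = NodeLabel.term → x ∈ L ++ [v] :=
      fun x hxt => List.mem_append_left _ (hterm x hxt)
    have hgood2 : Good G (L ++ [v]) := by
      intro i hi hterm'
      rw [List.length_append, List.length_singleton] at hi
      rcases lt_or_eq_of_le (Nat.lt_succ_iff.mp hi) with hi' | hi'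
      · have hget : (L ++ [v]).get ⟨i, by simp; omega⟩ = L.get ⟨i, hi'⟩ := by
          simp [List.getElem_append_left hi']
        rw [hget] at hterm' ⊢
        obtain ⟨j, hj, hji, harc'⟩ := hgood i hi' hterm'
        refine ⟨j, by simp; omega, hji, ?_⟩
        have : (L ++ [v]).get ⟨j, by simp; omega⟩ = L.get ⟨j, hj⟩ := by
          simp [List.getElem_append_left hj]
        rw [this]; exact harc'
      · subst hi'
        have hget : (L ++ [v]).get ⟨L.length, by simp⟩ = v := by
          simp
        obtain ⟨j, hj, hwj⟩ := List.mem_iff_get.mp hw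
        refine ⟨j.1, by simp only [List.length_append, List.length_singleton]; omega, j.2, ?_⟩
        have : (L ++ [v]).get ⟨j.1, by simp only [List.length_append, List.length_singleton]; omega⟩ = L.get j := by
          simp [List.getElem_append_left j.2]
        rw [hget, this]; exact harc
    have hlen2 : (L ++ [v]).length + m = Fintype.card V := by simp; omega
    obtain ⟨L', hnd', hall', hgood', hpre'⟩ := ih (L ++ [v]) hnd2 hterm2 hgood2 hlen2
    exact ⟨L', hnd', hall', hgood', (List.prefix_append L [v]).trans hpre'⟩

theorem stmt2 {V : Type} [Fintype V] (G : SSG V) (hG : G.Stopping) :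
    ∃ f : V → ℕ, Function.Injective f ∧
      Set.range f = Set.Icc 1 (Fintype.card V) ∧
      ({f G.t0, f G.t1} : Set ℕ) = {Fintype.card V - 1, Fintype.card V} ∧
      ∀ v, G.label v ≠ NodeLabel.term → ∃ w, G.Arc v w ∧ f v < f w := by
  haveI := Classical.decEq V
  set n := Fintype.card V with hn
  have hn2 : 2 ≤ n := by
    have := Fintype.one_lt_card_iff.mpr ⟨G.t0, G.t1, G.t0_ne_t1⟩
    omega
  have hnd0 : ([G.t1, G.t0] : List V).Nodup := by
    simp [Ne.symm G.t0_ne_t1]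
  have hterm0 : ∀ v, G.label v = NodeLabel.term → v ∈ ([G.t1, G.t0] : List V) := by
    intro v hv
    rcases (G.term_iff v).mp hv with h | h <;> simp [h]
  have hgood0 : Good G ([G.t1, G.t0] : List V) := by
    intro i hi hter
    exfalso
    apply hter
    have hi2 : i < 2 := by simpa using hi
    interval_cases i
    · exact (G.term_iff G.t1).mpr (Or.inr rfl)
    · exact (G.term_iff G.t0).mpr (Or.inl rfl)
  obtain ⟨L, hnd, hall, hgood, hpre⟩ := extend G hG (n - 2) [G.t1, G.t0] hnd0 hterm0 hgood0
    (by simp; omega)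
  have hlenL : L.length = n := by
    have h2 : L.toFinset = Finset.univ :=
      Finset.eq_univ_of_forall (fun v => List.mem_toFinset.mpr (hall v))
    have := List.toFinset_card_of_nodup hnd
    rw [h2, Finset.card_univ] at this
    omega
  have hidx : ∀ v : V, L.idxOf v < n := by
    intro v; rw [← hlenL]; exact List.idxOf_lt_length_iff.mpr (hall v)
  have hget0 : L.get ⟨0, by omega⟩ = G.t1 := by
    obtain ⟨t, ht⟩ := hpre
    subst ht; rfl
  have hget1 : L.get ⟨1, by omega⟩ = G.t0 := by
    obtain ⟨t, ht⟩ := hpre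
    subst ht; rfl
  have hidx1 : L.idxOf G.t1 = 0 := by
    rw [← hget0]; exact List.get_idxOf hnd _
  have hidx0 : L.idxOf G.t0 = 1 := by
    rw [← hget1]; exact List.get_idxOf hnd _
  refine ⟨fun v => n - L.idxOf v, ?_, ?_, ?_, ?_⟩
  · intro a b hab
    simp only at hab
    have ha := hidx a
    have hb := hidx b
    have : L.idxOf a = L.idxOf b := by omega
    have h1 : L.get ⟨L.idxOf a, by omega⟩ = a := List.idxOf_get (by omega)
    have h2 : L.get ⟨L.idxOf b, by omega⟩ = b := List.idxOf_get (by omega)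
    calc a = L.get ⟨List.idxOf a L, by omega⟩ := h1.symm
      _ = L.get ⟨List.idxOf b L, by omega⟩ := by congr 1; exact Fin.ext this
      _ = b := h2
  · ext k
    simp only [Set.mem_range, Set.mem_Icc]
    constructor
    · rintro ⟨v, rfl⟩
      have := hidx v
      omega
    · rintro ⟨hk1, hkn⟩
      refine ⟨L.get ⟨n - k, by omega⟩, ?_⟩
      rw [List.get_idxOf hnd]
      show n - (n - k) = k
      omega
  · show ({n - List.idxOf G.t0 L, n - List.idxOf G.t1 L} : Set ℕ) = {n - 1, n}
    rw [hidx0, hidx1]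
    norm_num
  · intro v hv
    have hiv := hidx v
    have hvget : L.get ⟨L.idxOf v, by omega⟩ = v := List.idxOf_get (by omega)
    obtain ⟨j, hj, hji, harc⟩ := hgood (L.idxOf v) (by omega) (by rw [hvget]; exact hv)
    refine ⟨L.get ⟨j, hj⟩, by rw [← hvget]; exact harc, ?_⟩
    show n - List.idxOf v L < n - List.idxOf (L.get ⟨j, hj⟩) L
    rw [List.get_idxOf hnd ⟨j, hj⟩]
    show n - List.idxOf v L < n - j
    omega
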